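/- In the anchored burning process on a finite wired graph G_Λ with anchor D, for each 1 ≤ i ≤ K+1 the set of vertices not yet burnt at the end of Phase i equals the set of descendants of D_{K−i+1} in the spanning tree φ_{D,Λ}(η): U^{(i+1)}_0 = desc_{φ_{D,Λ}(η)}(D_{K−i+1}). -/

import Mathlib

open Finset
open scoped Classical

namespace Anchored

variable {V : Type*} [DecidableEq V]

/-- iterating a partial parent map; `none` represents the sink. -/
def iterP (p : V → Option V) : ℕ → V → Option V
  | 0, v => some v
  | n + 1, v => (p v).bind (iterP p n)

/-- walks in the multigraph `a` avoiding the set `A` -/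
def ReachAvoid (a : V → V → ℕ) (A : Finset V) (u v : V) : Prop :=
  ∃ (nn : ℕ) (f : ℕ → V), f 0 = u ∧ f nn = v ∧ (∀ j ≤ nn, f j ∉ A) ∧
    ∀ j < nn, 0 < a (f j) (f (j + 1))

/-- oriented edges (with multiplicity index) from `v` into the finite set `T` -/
def edgesTo (a : V → V → ℕ) (v : V) (T : Finset V) : Finset (V × ℕ) :=
  T.biUnion fun w => (Finset.range (a v w)).image fun i => (w, i)

variable (a : V → V → ℕ) (S : Finset V) (out : V → Finset V)

/-- number of edges from `v` to the sink of the wired graph on `S`;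
`out v` is the set of heads of sink edges at `v` (actual vertices of `G`). -/
def sk (v : V) : ℕ := ∑ w ∈ out v, a v w

/-- degree of `v` in the wired graph on `S` -/
def degS (v : V) : ℕ := sk a out v + ∑ w ∈ S, a v w

variable (η : V → ℕ) (D : ℕ → Finset V) (kk : ℕ)

/-- number of global steps allotted to each phase of the anchored burning -/
def plen : ℕ := S.card + 1

/-- Flattened anchored burning process: `U m` is the set of unburnt vertices
after `m` global steps; phase `i` (for `i = 1, …, kk + 1`) occupies the steps
`m ∈ [(i-1)·plen, i·plen)` and forbids burning the vertices of `D (kk - i + 1)`.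
A vertex burns when its height is at least its number of edges to unburnt
vertices (the sink being burnt at time `0`). -/
def U : ℕ → Finset V
  | 0 => S
  | m + 1 => (U m).filter fun v =>
      v ∈ D (kk - m / plen S) ∨ η v < ∑ w ∈ U m, a v w

/-- the (anchored) burning time of `v` -/
noncomputable def τ (v : V) : ℕ := sInf {m | v ∉ U a S η D kk m}

/-- number of oriented edges from `v` whose head was burnt strictly before `v`
(including the sink edges) -/
noncomputable def mv (v : V) : ℕ :=
  sk a out v + ∑ w ∈ S \ U a S η D kk (τ a S η D kk v - 1), a v w

/-- the set of candidate tree edges at `v`: the oriented edges from `v` to the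
layer burnt at the previous step (at the first step of a phase: to everything
burnt in earlier phases, including the sink) -/
noncomputable def Fv (v : V) : Finset (V × ℕ) :=
  if (τ a S η D kk v - 1) % plen S = 0 then
    edgesTo a v (out v) ∪ edgesTo a v (S \ U a S η D kk (τ a S η D kk v - 1))
  else
    edgesTo a v
      (U a S η D kk (τ a S η D kk v - 2) \ U a S η D kk (τ a S η D kk v - 1))

/-- `Spec … prec e` says that `e` encodes the spanning tree assigned to `η` by
the anchored burning bijection: each `v ∈ S` gets the edge of `F_v` having
exactly `ℓ` predecessors in the ordering `prec v`, where
`η v = deg v - m_v + ℓ`. -/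
def Spec (prec : V → (V × ℕ) → (V × ℕ) → Prop) (e : V → Option (V × ℕ)) : Prop :=
  (∀ v ∉ S, e v = none) ∧
  ∀ v ∈ S, ∃ ed : V × ℕ, e v = some ed ∧ ed ∈ Fv a S out η D kk v ∧
    η v + mv a S out η D kk v =
      degS a S out v + ((Fv a S out η D kk v).filter fun f => prec v f ed).card

/-- the parent map (toward the sink) of an encoded spanning tree -/
def par (e : V → Option (V × ℕ)) (v : V) : Option V :=
  (e v).bind fun p => if p.1 ∈ S then some p.1 else none

/-- spanning trees of the wired graph on `S`, oriented toward the sink: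
every vertex of `S` carries exactly one valid oriented edge, and following
these edges one reaches the sink. -/
def IsSpanningTree (e : V → Option (V × ℕ)) : Prop :=
  (∀ v ∉ S, e v = none) ∧
  (∀ v ∈ S, ∃ w i, e v = some (w, i) ∧ i < a v w ∧ (w ∈ S ∨ w ∈ out v)) ∧
  (∀ v ∈ S, ∃ m, iterP (par S e) m v = none)

/-- stable configurations on the wired graph on `S` -/
def Stable : Prop := ∀ v ∈ S, η v < degS a S out v

/-- ample for every nonempty subset of `S` -/
def Ample : Prop := ∀ F ⊆ S, F.Nonempty → ∃ x ∈ F, ∑ y ∈ F, a x y ≤ η x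

/-- recurrent configurations on the wired graph on `S` -/
def Recurrent : Prop := Stable a S out η ∧ Ample a S η

end Anchored

namespace Anchored

section Aux

variable {V : Type*} [DecidableEq V]
variable {a : V → V → ℕ} {S : Finset V} {out : V → Finset V}
  {η : V → ℕ} {D : ℕ → Finset V} {kk : ℕ}

lemma plen_pos : 0 < plen S := Nat.succ_pos _

lemma U_succ (m : ℕ) : U a S η D kk (m + 1) = (U a S η D kk m).filter
    (fun v => v ∈ D (kk - m / plen S) ∨ η v < ∑ w ∈ U a S η D kk m, a v w) := rfl

lemma U_subset : ∀ m, U a S η D kk m ⊆ S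
  | 0 => Finset.Subset.refl S
  | m + 1 => (Finset.filter_subset _ _).trans (U_subset m)

lemma U_anti {m n : ℕ} (h : m ≤ n) : U a S η D kk n ⊆ U a S η D kk m := by
  induction n, h using Nat.le_induction with
  | base => exact Finset.Subset.refl _
  | succ n hmn ih => exact (Finset.filter_subset _ _).trans ih

lemma U_card_le (hA : Ample a S η) (hD0 : D 0 = ∅) :
    ∀ t, (U a S η D kk ((kk + 1) * plen S + t)).card ≤ S.card - t := by
  intro t
  induction t with
  | zero => simpa using Finset.card_le_card (U_subset _)
  | succ t ih =>
    set N := (kk + 1) * plen S + t with hN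
    have hstep : (kk + 1) * plen S + (t + 1) = N + 1 := by omega
    rcases eq_or_ne (U a S η D kk N) ∅ with h | h
    · rw [hstep, U_succ, h]
      simp only [Finset.filter_empty, Finset.card_empty]
      exact Nat.zero_le _
    · obtain ⟨x, hx, hxa⟩ := hA (U a S η D kk N) (U_subset N)
        (Finset.nonempty_iff_ne_empty.2 h)
      have hdiv : kk + 1 ≤ N / plen S :=
        (Nat.le_div_iff_mul_le plen_pos).2 (by omega)
      have hDN : D (kk - N / plen S) = ∅ := by
        rw [show kk - N / plen S = 0 by omega, hD0]
      have hxnot : x ∉ U a S η D kk (N + 1) := by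
        rw [U_succ, Finset.mem_filter, hDN]
        simp only [Finset.notMem_empty, false_or]
        push_neg
        intro _
        exact hxa
      have hss : U a S η D kk (N + 1) ⊂ U a S η D kk N :=
        Finset.ssubset_iff_of_subset (Finset.filter_subset _ _)
          |>.2 ⟨x, hx, hxnot⟩
      have := Finset.card_lt_card hss
      rw [hstep]
      omega

lemma U_empty (hA : Ample a S η) (hD0 : D 0 = ∅) :
    U a S η D kk ((kk + 1) * plen S + S.card) = ∅ := by
  have h := U_card_le (kk := kk) (D := D) hA hD0 S.card
  rw [Nat.sub_self] at h
  exact Finset.card_eq_zero.1 (Nat.le_zero.1 h)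

lemma mem_U_iff (hA : Ample a S η) (hD0 : D 0 = ∅) {v : V} {m : ℕ} :
    v ∈ U a S η D kk m ↔ m < τ a S η D kk v := by
  have hne : {n | v ∉ U a S η D kk n}.Nonempty :=
    ⟨(kk + 1) * plen S + S.card, by simp [U_empty hA hD0]⟩
  constructor
  · intro hv
    by_contra hlt
    push_neg at hlt
    exact (Nat.sInf_mem hne) (U_anti hlt hv)
  · intro hlt
    by_contra hv
    have h2 : τ a S η D kk v ≤ m := Nat.sInf_le hv
    omega

lemma tau_pos (hA : Ample a S η) (hD0 : D 0 = ∅) {v : V} (hv : v ∈ S) :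
    0 < τ a S η D kk v :=
  (mem_U_iff hA hD0).1 (show v ∈ U a S η D kk 0 from hv)

lemma not_mem_U_tau (hA : Ample a S η) (hD0 : D 0 = ∅) (v : V) :
    v ∉ U a S η D kk (τ a S η D kk v) := by
  rw [mem_U_iff hA hD0]
  omega

/-- within any full phase `j ≥ 1` the process stabilizes before the last step -/
lemma U_phase_end (j : ℕ) (hj : 1 ≤ j) :
    U a S η D kk (j * plen S) = U a S η D kk (j * plen S - 1) := by
  have hP : 0 < plen (S := S) := plen_pos
  have hjm : (j - 1) * plen S + plen S = j * plen S := by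
    have h' : j - 1 + 1 = j := by omega
    calc (j - 1) * plen S + plen S = (j - 1 + 1) * plen S := by ring
    _ = j * plen S := by rw [h']
  -- find a stabilization step inside the phase
  have hstab : ∃ m, (j - 1) * plen S ≤ m ∧ m + 1 ≤ j * plen S ∧
      U a S η D kk m = U a S η D kk (m + 1) := by
    by_contra hc
    push_neg at hc
    have key : ∀ t ≤ plen S, (U a S η D kk ((j - 1) * plen S + t)).card + t ≤
        (U a S η D kk ((j - 1) * plen S)).card := by
      intro t ht
      induction t with
      | zero => simp
      | succ t ih =>
        have ih' := ih (by omega)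
        set m := (j - 1) * plen S + t with hm
        have hne := hc m (by omega) (by omega)
        have hss : U a S η D kk (m + 1) ⊂ U a S η D kk m :=
          lt_of_le_of_ne (Finset.filter_subset _ _) (Ne.symm hne)
        have := Finset.card_lt_card hss
        have hrw : (j - 1) * plen S + (t + 1) = m + 1 := by omega
        rw [hrw]
        omega
    have hcard := key (plen S) le_rfl
    have h1 : (U a S η D kk ((j - 1) * plen S)).card ≤ S.card :=
      Finset.card_le_card (U_subset _)
    have h2 : (U a S η D kk ((j - 1) * plen S + plen S)).card ≤ S.card :=
      Finset.card_le_card (U_subset _)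
    simp only [plen] at hcard h1 h2
    omega
  obtain ⟨m, hm1, hm2, hmeq⟩ := hstab
  -- the process is constant from `m` to the end of the phase
  have hconst : ∀ n, m ≤ n → n ≤ j * plen S → U a S η D kk n = U a S η D kk m := by
    intro n hn
    induction n, hn using Nat.le_induction with
    | base => intro _; rfl
    | succ n hmn ih =>
      intro hn1
      have hUn : U a S η D kk n = U a S η D kk m := ih (by omega)
      have hdivn : n / plen S = j - 1 :=
        Nat.div_eq_of_lt_le (by omega) (by rw [add_one_mul]; omega)
      have hdivm : m / plen S = j - 1 :=
        Nat.div_eq_of_lt_le (by omega) (by rw [add_one_mul]; omega)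
      rw [U_succ, hUn, hdivn, ← hdivm, ← U_succ, ← hmeq]
  have hend := hconst (j * plen S) (by omega) le_rfl
  have hend1 := hconst (j * plen S - 1) (by omega) (by omega)
  rw [hend, hend1]

/-- at the end of a full phase every unburnt vertex is protected or lacks
burnt neighbours -/
lemma phase_fixed (j : ℕ) (hj : 1 ≤ j) {v : V}
    (hv : v ∈ U a S η D kk (j * plen S)) :
    v ∈ D (kk - (j - 1)) ∨ η v < ∑ w ∈ U a S η D kk (j * plen S), a v w := by
  have hP : 0 < plen (S := S) := plen_pos
  have hjP : 0 < j * plen S := Nat.mul_pos (by omega) hP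
  have h1 : j * plen S - 1 + 1 = j * plen S := by omega
  have hjm : (j - 1) * plen S + plen S = j * plen S := by
    have h' : j - 1 + 1 = j := by omega
    calc (j - 1) * plen S + plen S = (j - 1 + 1) * plen S := by ring
    _ = j * plen S := by rw [h']
  have hdiv : (j * plen S - 1) / plen S = j - 1 :=
    Nat.div_eq_of_lt_le (by omega) (by rw [add_one_mul]; omega)
  have hv' := hv
  rw [← h1, U_succ, Finset.mem_filter, hdiv, ← U_phase_end j hj] at hv'
  exact hv'.2

lemma protected_mem (hmono : Monotone D) (hK : D kk ⊆ S) {i : ℕ} (hi1 : 1 ≤ i)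
    (hik : i ≤ kk + 1) {u : V} (hu : u ∈ D (kk + 1 - i)) :
    ∀ m ≤ i * plen S, u ∈ U a S η D kk m := by
  intro m hm
  induction m with
  | zero => exact hK (hmono (by omega) hu)
  | succ m ih =>
    have hm' : m < i * plen S := by omega
    have ihm := ih (le_of_lt hm')
    rw [U_succ, Finset.mem_filter]
    refine ⟨ihm, Or.inl ?_⟩
    have hdiv : m / plen S < i := (Nat.div_lt_iff_lt_mul plen_pos).2 hm'
    exact hmono (by omega) hu

lemma mem_edgesTo_fst {v : V} {T : Finset V} {ed : V × ℕ}
    (h : ed ∈ edgesTo a v T) : ed.1 ∈ T := by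
  simp only [edgesTo, Finset.mem_biUnion, Finset.mem_image, Finset.mem_range] at h
  obtain ⟨w, hw, i, -, rfl⟩ := h
  exact hw

/-- the tree edge of `v` points to a vertex of `S` burnt strictly before `v`,
or to the sink -/
lemma par_lt (hA : Ample a S η) (hD0 : D 0 = ∅)
    (houtS : ∀ v w, w ∈ out v → w ∉ S)
    {prec : V → (V × ℕ) → (V × ℕ) → Prop} {e : V → Option (V × ℕ)}
    (he : Spec a S out η D kk prec e)
    {v u : V} (h : par S e v = some u) :
    u ∈ S ∧ τ a S η D kk u < τ a S η D kk v := by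
  have hvS : v ∈ S := by
    by_contra hv
    rw [par, he.1 v hv] at h
    simp at h
  obtain ⟨ed, hed, hFv, -⟩ := he.2 v hvS
  rw [par, hed] at h
  simp only [Option.bind_some] at h
  by_cases hS : ed.1 ∈ S
  · rw [if_pos hS, Option.some_inj] at h
    subst h
    have hnot : ed.1 ∉ U a S η D kk (τ a S η D kk v - 1) := by
      rw [Fv] at hFv
      split_ifs at hFv with hmod
      · rcases Finset.mem_union.1 hFv with h1 | h1
        · exact absurd hS (houtS v ed.1 (mem_edgesTo_fst h1))
        · exact (Finset.mem_sdiff.1 (mem_edgesTo_fst h1)).2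
      · exact (Finset.mem_sdiff.1 (mem_edgesTo_fst hFv)).2
    have h1 : ¬ (τ a S η D kk v - 1 < τ a S η D kk ed.1) := by
      rw [← mem_U_iff hA hD0]
      exact hnot
    have h2 := tau_pos (kk := kk) hA hD0 hvS
    exact ⟨hS, by omega⟩
  · rw [if_neg hS] at h
    simp at h

/-- descendants of a protected set remain unburnt through the phase -/
lemma desc_unburnt (hA : Ample a S η) (hD0 : D 0 = ∅) (hmono : Monotone D)
    (hK : D kk ⊆ S) (houtS : ∀ v w, w ∈ out v → w ∉ S)
    {prec : V → (V × ℕ) → (V × ℕ) → Prop} {e : V → Option (V × ℕ)}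
    (he : Spec a S out η D kk prec e)
    {i : ℕ} (hi1 : 1 ≤ i) (hik : i ≤ kk + 1) :
    ∀ m (w u : V), iterP (par S e) m w = some u → u ∈ D (kk + 1 - i) →
      i * plen S < τ a S η D kk w := by
  intro m
  induction m with
  | zero =>
    intro w u hit hu
    rw [iterP, Option.some_inj] at hit
    subst hit
    exact (mem_U_iff hA hD0).1 (protected_mem hmono hK hi1 hik hu _ le_rfl)
  | succ m ih =>
    intro w u hit hu
    rw [iterP] at hit
    obtain ⟨u', hu', hit'⟩ := Option.bind_eq_some_iff.1 hit
    have h1 := par_lt hA hD0 houtS he hu'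
    have h2 := ih u' u hit' hu
    omega

/-- every vertex unburnt at the end of phase `i` has a tree path into the
protected set -/
lemma unburnt_desc (hA : Ample a S η) (hD0 : D 0 = ∅) (hmono : Monotone D)
    (hK : D kk ⊆ S) (houtS : ∀ v w, w ∈ out v → w ∉ S)
    {prec : V → (V × ℕ) → (V × ℕ) → Prop} {e : V → Option (V × ℕ)}
    (he : Spec a S out η D kk prec e)
    {i : ℕ} (hi1 : 1 ≤ i) :
    ∀ N (w : V), w ∈ S → τ a S η D kk w ≤ N → i * plen S < τ a S η D kk w →
      ∃ m u, iterP (par S e) m w = some u ∧ u ∈ D (kk + 1 - i) := by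
  intro N
  induction N with
  | zero => intro w _ h1 h2; omega
  | succ N ih =>
    intro w hwS hN hτ
    by_cases hwD : w ∈ D (kk + 1 - i)
    · exact ⟨0, w, rfl, hwD⟩
    have hP : 0 < plen (S := S) := plen_pos
    set t := τ a S η D kk w - 1 with ht
    have hti : i * plen S ≤ t := by omega
    have htlt : t < τ a S η D kk w := by omega
    have hwUt : w ∈ U a S η D kk t := (mem_U_iff hA hD0).2 htlt
    by_cases hmod : t % plen S = 0
    · -- first step of a phase: impossible by the end-of-phase fixed point
      exfalso
      obtain ⟨j, hjt⟩ := (Nat.dvd_of_mod_eq_zero hmod)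
      rw [Nat.mul_comm] at hjt
      have hji : i ≤ j := by
        by_contra hji
        push_neg at hji
        have : j * plen S < i * plen S := (Nat.mul_lt_mul_right hP).2 hji
        omega
      have hj1 : 1 ≤ j := le_trans hi1 hji
      have hwUt' : w ∈ U a S η D kk (j * plen S) := by
        rwa [← hjt]
      have hfix := phase_fixed j hj1 hwUt'
      rcases hfix with h1 | h1
      · refine hwD (hmono ?_ h1)
        omega
      · -- w burns at step t, contradiction
        have hwnot : w ∉ U a S η D kk (t + 1) := by
          have : τ a S η D kk w = t + 1 := by omega
          rw [← this]
          exact not_mem_U_tau hA hD0 w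
        rw [U_succ, Finset.mem_filter] at hwnot
        push_neg at hwnot
        have h2 := (hwnot hwUt).2
        rw [hjt] at h2
        omega
    · -- middle of a phase: the tree edge points to the previous layer
      obtain ⟨ed, hed, hFv, -⟩ := he.2 w hwS
      rw [Fv, if_neg (by rwa [← ht])] at hFv
      have hed1 := mem_edgesTo_fst hFv
      rw [Finset.mem_sdiff] at hed1
      have ht1 : τ a S η D kk w - 2 = t - 1 := by omega
      rw [ht1] at hed1
      have hti1 : i * plen S ≤ t - 1 := by
        have : t ≠ i * plen S := by
          intro hcon
          rw [hcon, Nat.mul_mod_left] at hmod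
          exact hmod rfl
        omega
      set u' := ed.1 with hu'
      have hu'S : u' ∈ S := U_subset _ hed1.1
      have hu'U : u' ∈ U a S η D kk (i * plen S) := U_anti hti1 hed1.1
      have hu'τ : i * plen S < τ a S η D kk u' := (mem_U_iff hA hD0).1 hu'U
      have hu'lt : τ a S η D kk u' ≤ t := by
        by_contra hcon
        push_neg at hcon
        exact hed1.2 ((mem_U_iff hA hD0).2 hcon)
      have hpar : par S e w = some u' := by
        rw [par, hed]
        simp [hu'S]
        exact ⟨hu'S, rfl⟩
      obtain ⟨m, u, hit, hu⟩ := ih u' hu'S (by omega) hu'τ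
      exact ⟨m + 1, u, by rw [iterP, hpar, Option.bind_some, hit], hu⟩

end Aux

end Anchored

/-- In the anchored burning process on the finite wired graph
`G_Λ` (`S = Λ`), for each `1 ≤ i ≤ K + 1` the set of vertices unburnt at the
end of Phase `i` (global step `i · plen`) equals the set of descendants of
`D (K - i + 1)` in the spanning tree `φ_{D,Λ}(η)`: the vertices `w` whose
path to the sink in the tree passes through `D (K - i + 1)`. -/
theorem stmt6 {V : Type*} [DecidableEq V] [Infinite V]
    (a : V → V → ℕ) (nbrs : V → Finset V)
    (hsymm : ∀ u v, a u v = a v u) (hloop : ∀ v, a v v = 0)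
    (hnbrs : ∀ v w, w ∈ nbrs v ↔ 0 < a v w)
    (hconn : ∀ u v : V, Anchored.ReachAvoid a ∅ u v)
    (S : Finset V) (hS : S.Nonempty)
    (D : ℕ → Finset V) (hmono : Monotone D) (hD0 : D 0 = ∅)
    (hcover : ∀ v, ∃ j, v ∈ D j)
    (hsc : ∀ j, 1 ≤ j → ∀ v ∉ D j, {w | Anchored.ReachAvoid a (D j) v w}.Infinite)
    (kk : ℕ) (hK : D kk ⊆ S) (hKmax : ∀ j, D j ⊆ S → j ≤ kk)
    (prec : V → (V × ℕ) → (V × ℕ) → Prop)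
    (hprec : ∀ v, IsStrictTotalOrder (V × ℕ) (prec v))
    (out : V → Finset V) (hout : ∀ v, out v = nbrs v \ S)
    (η : V → ℕ) (hη : Anchored.Recurrent a S out η)
    (e : V → Option (V × ℕ)) (he : Anchored.Spec a S out η D kk prec e) :
    ∀ i, 1 ≤ i → i ≤ kk + 1 →
      Anchored.U a S η D kk (i * Anchored.plen S) =
        S.filter fun w => ∃ (m : ℕ) (u : V),
          Anchored.iterP (Anchored.par S e) m w = some u ∧ u ∈ D (kk + 1 - i) := by
  intro i hi1 hik
  have hA : Anchored.Ample a S η := hη.2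
  have houtS : ∀ v w, w ∈ out v → w ∉ S := by
    intro v w hw
    rw [hout] at hw
    exact (Finset.mem_sdiff.1 hw).2
  ext w
  rw [Finset.mem_filter]
  constructor
  · intro hw
    refine ⟨Anchored.U_subset _ hw, ?_⟩
    exact Anchored.unburnt_desc hA hD0 hmono hK houtS he hi1
      (Anchored.τ a S η D kk w) w (Anchored.U_subset _ hw) le_rfl
      ((Anchored.mem_U_iff hA hD0).1 hw)
  · rintro ⟨hwS, m, u, hit, hu⟩
    exact (Anchored.mem_U_iff hA hD0).2
      (Anchored.desc_unburnt hA hD0 hmono hK houtS he hi1 hik m w u hit hu)
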